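/- Let P ∈ ℝ^{n×n} and Q ∈ ℝ^{m×m} be symmetric positive semidefinite with pseudoinverses P⁺, Q⁺ and null-space projections Π_P^⊥, Π_Q^⊥, and let L : ℝ^{n×m} → ℝ be any function. Then inf over Θ of L(Θ) + ‖PΘQ‖_* equals inf over triples (Θ₁, Θ₂, Θ₃) of n×m matrices of L(P⁺Θ₁Q⁺ + Π_P^⊥Θ₂ + Θ₃Π_Q^⊥) + ‖Θ₁‖_*. -/

import Mathlib

open Matrix BigOperators

/-- Nuclear norm: sum of singular values, i.e. trace of the PSD square root of `Θᵀ * Θ`. -/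
noncomputable def nuclearNorm {n m : ℕ} (Θ : Matrix (Fin n) (Fin m) ℝ) : ℝ :=
  ((Matrix.posSemidef_conjTranspose_mul_self Θ).1.eigenvectorUnitary.1 *
    diagonal ((fun x : ℝ => (x : ℝ)) ∘ (√·) ∘ (Matrix.posSemidef_conjTranspose_mul_self Θ).1.eigenvalues) *
    (star (Matrix.posSemidef_conjTranspose_mul_self Θ).1.eigenvectorUnitary : Matrix (Fin m) (Fin m) ℝ)).trace

/-- Frobenius norm. -/
noncomputable def frobNorm {n m : ℕ} (A : Matrix (Fin n) (Fin m) ℝ) : ℝ :=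
  Real.sqrt (∑ i, ∑ j, (A i j) ^ 2)

/-- `B` is the Moore–Penrose pseudoinverse of `A` (the four Penrose conditions). -/
def IsMoorePenrose {n m : ℕ} (A : Matrix (Fin n) (Fin m) ℝ) (B : Matrix (Fin m) (Fin n) ℝ) : Prop :=
  A * B * A = A ∧ B * A * B = B ∧ (A * B)ᵀ = A * B ∧ (B * A)ᵀ = B * A

/-- `Pr` is the orthogonal projection matrix onto the subspace `S`. -/
def IsOrthProjOnto {n : ℕ} (Pr : Matrix (Fin n) (Fin n) ℝ) (S : Submodule ℝ (Fin n → ℝ)) : Prop :=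
  Prᵀ = Pr ∧ Pr * Pr = Pr ∧ LinearMap.range Pr.mulVecLin = S

section helpers
/-- PSD square root (spectral). -/
noncomputable def Matrix.PosSemidef.sqrt {k : ℕ} {A : Matrix (Fin k) (Fin k) ℝ} (hA : A.PosSemidef) :
    Matrix (Fin k) (Fin k) ℝ :=
  hA.1.eigenvectorUnitary.1 * diagonal ((fun x : ℝ => (x : ℝ)) ∘ (√·) ∘ hA.1.eigenvalues) *
    (star hA.1.eigenvectorUnitary : Matrix (Fin k) (Fin k) ℝ)

lemma nuclearNorm_eq_sqrt {n m : ℕ} (Θ : Matrix (Fin n) (Fin m) ℝ) :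
    nuclearNorm Θ = (Matrix.posSemidef_conjTranspose_mul_self Θ).sqrt.trace := rfl

lemma Matrix.PosSemidef.posSemidef_sqrt {k : ℕ} {A : Matrix (Fin k) (Fin k) ℝ} (hA : A.PosSemidef) :
    hA.sqrt.PosSemidef := by
  have hd := (Matrix.PosSemidef.diagonal (R := ℝ) (n := Fin k)
    (d := (fun x : ℝ => (x : ℝ)) ∘ (√·) ∘ hA.1.eigenvalues)
    (fun i => Real.sqrt_nonneg _)).mul_mul_conjTranspose_same hA.1.eigenvectorUnitary.1
  unfold Matrix.PosSemidef.sqrt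
  rwa [Matrix.star_eq_conjTranspose]

lemma Matrix.PosSemidef.sqrt_mul_self {k : ℕ} {A : Matrix (Fin k) (Fin k) ℝ} (hA : A.PosSemidef) :
    hA.sqrt * hA.sqrt = A := by
  have hU : (star hA.1.eigenvectorUnitary : Matrix (Fin k) (Fin k) ℝ) * hA.1.eigenvectorUnitary.1 = 1 :=
    Unitary.coe_star_mul_self _
  have hD : diagonal ((fun x : ℝ => (x : ℝ)) ∘ (√·) ∘ hA.1.eigenvalues) *
      diagonal ((fun x : ℝ => (x : ℝ)) ∘ (√·) ∘ hA.1.eigenvalues) =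
      diagonal (RCLike.ofReal ∘ hA.1.eigenvalues) := by
    rw [diagonal_mul_diagonal]
    congr 1
    funext i
    simp [Real.mul_self_sqrt (hA.eigenvalues_nonneg i)]
  conv_rhs => rw [hA.1.spectral_theorem, Unitary.conjStarAlgAut_apply]
  unfold Matrix.PosSemidef.sqrt
  simp only [Matrix.mul_assoc]
  rw [← Matrix.mul_assoc (star hA.1.eigenvectorUnitary : Matrix (Fin k) (Fin k) ℝ), hU,
    Matrix.one_mul, ← Matrix.mul_assoc (diagonal _) (diagonal _), hD]

lemma psd_trace_nonneg {k : ℕ} {A : Matrix (Fin k) (Fin k) ℝ} (hA : A.PosSemidef) :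
    0 ≤ A.trace := by
  rw [Matrix.trace]
  apply Finset.sum_nonneg
  intro i _
  have := hA.dotProduct_mulVec_nonneg (Pi.single i 1)
  simpa [dotProduct, Matrix.mulVec_single, Pi.single_apply] using this

lemma trace_mul_nonneg' {k : ℕ} {A B : Matrix (Fin k) (Fin k) ℝ}
    (hA : A.PosSemidef) (hB : B.PosSemidef) : 0 ≤ (A * B).trace := by
  have h2 := hB.mul_mul_conjTranspose_same hA.sqrt
  rw [hA.posSemidef_sqrt.isHermitian.eq] at h2
  have h1 : A * B = hA.sqrt * (hA.sqrt * B) := by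
    rw [← Matrix.mul_assoc, hA.sqrt_mul_self]
  rw [h1, Matrix.trace_mul_comm]
  exact psd_trace_nonneg h2

lemma psd_smul {k : ℕ} {A : Matrix (Fin k) (Fin k) ℝ} (hA : A.PosSemidef) {c : ℝ} (hc : 0 ≤ c) :
    (c • A).PosSemidef := by
  refine ⟨?_, fun x => ?_⟩
  · have : (c • A)ᴴ = c • A := by rw [Matrix.conjTranspose_smul, hA.1.eq, star_trivial]
    exact this
  · exact (hA.smul hc).2 x

lemma smul_one_posDef {k : ℕ} {c : ℝ} (hc : 0 < c) :
    (c • (1 : Matrix (Fin k) (Fin k) ℝ)).PosDef := by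
  rw [Matrix.smul_one_eq_diagonal]
  exact Matrix.PosDef.diagonal (fun _ => hc)

lemma sqrt_trace_le_half {k : ℕ} {X Z : Matrix (Fin k) (Fin k) ℝ}
    (hX : X.PosSemidef) (hZ : Z.PosDef) :
    2 * hX.sqrt.trace ≤ (Z⁻¹ * X).trace + Z.trace := by
  set S := hX.sqrt with hSdef
  have hdet : IsUnit Z.det := hZ.det_pos.ne'.isUnit
  have hzz : Z⁻¹ * Z = 1 := Matrix.nonsing_inv_mul _ hdet
  have hzz' : Z * Z⁻¹ = 1 := Matrix.mul_nonsing_inv _ hdet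
  have hSymm : (S - Z)ᴴ = S - Z := by
    rw [conjTranspose_sub, hX.posSemidef_sqrt.isHermitian.eq, hZ.isHermitian.eq]
  have hpsd : ((S - Z) * (S - Z)).PosSemidef := by
    have := Matrix.posSemidef_conjTranspose_mul_self (S - Z)
    rwa [hSymm] at this
  have h0 := trace_mul_nonneg' hZ.inv.posSemidef hpsd
  have e1 : Z⁻¹ * ((S - Z) * (S - Z)) = Z⁻¹ * (S * S) - Z⁻¹ * (S * Z) - S + Z := by
    simp only [Matrix.mul_sub, Matrix.sub_mul, ← Matrix.mul_assoc, hzz, Matrix.one_mul]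
    abel
  have hSS : S * S = X := hX.sqrt_mul_self
  have e2 : ((Z⁻¹ * (S * Z))).trace = S.trace := by
    rw [← Matrix.mul_assoc, Matrix.trace_mul_cycle, hzz', Matrix.one_mul]
  rw [e1, hSS] at h0
  simp only [Matrix.trace_add, Matrix.trace_sub, e2] at h0
  linarith

lemma tr_sqrt_le_of_sq {k : ℕ} {X Z : Matrix (Fin k) (Fin k) ℝ}
    (hX : X.PosSemidef) (hZ : Z.PosDef) (h : (Z * Z - X).PosSemidef) :
    hX.sqrt.trace ≤ Z.trace := by
  have hdet : IsUnit Z.det := hZ.det_pos.ne'.isUnit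
  have hzz : Z⁻¹ * Z = 1 := Matrix.nonsing_inv_mul _ hdet
  have h0 := trace_mul_nonneg' hZ.inv.posSemidef h
  have e : Z⁻¹ * (Z * Z - X) = Z - Z⁻¹ * X := by
    rw [Matrix.mul_sub, ← Matrix.mul_assoc, hzz, Matrix.one_mul]
  rw [e, Matrix.trace_sub] at h0
  have h1 := sqrt_trace_le_half hX hZ
  linarith

lemma le_of_forall_pos_mul {a b c : ℝ} (hc : 0 ≤ c) (h : ∀ ε : ℝ, 0 < ε → a ≤ b + c * ε) :
    a ≤ b := by
  refine le_of_forall_pos_le_add ?_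
  intro ε hε
  have h2 := h (ε / (c + 1)) (by positivity)
  have h3 : c * (ε / (c + 1)) ≤ ε := by
    rw [mul_div_assoc', div_le_iff₀ (by positivity)]
    nlinarith
  linarith

lemma sqrt_trace_mono {k : ℕ} {X Y : Matrix (Fin k) (Fin k) ℝ}
    (hX : X.PosSemidef) (hY : Y.PosSemidef) (h : (Y - X).PosSemidef) :
    hX.sqrt.trace ≤ hY.sqrt.trace := by
  refine le_of_forall_pos_mul (c := (k : ℝ)) (Nat.cast_nonneg k) ?_
  intro ε hε
  set T := hY.sqrt with hT
  have hTpsd : T.PosSemidef := hY.posSemidef_sqrt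
  have hTT : T * T = Y := hY.sqrt_mul_self
  have hZpd : (T + ε • 1).PosDef := Matrix.PosDef.posSemidef_add hTpsd (smul_one_posDef hε)
  set Z := T + ε • (1 : Matrix (Fin k) (Fin k) ℝ) with hZ
  have hZtr : Z.trace = T.trace + (k : ℝ) * ε := by
    rw [hZ, Matrix.trace_add, Matrix.trace_smul, Matrix.trace_one]
    simp [mul_comm]
  have hZZ : Z * Z - X = (Y - X) + ((2 * ε) • T + (ε * ε) • (1 : Matrix (Fin k) (Fin k) ℝ)) := by
    rw [hZ]
    simp only [Matrix.add_mul, Matrix.mul_add, Matrix.smul_mul, Matrix.mul_smul,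
      Matrix.mul_one, Matrix.one_mul, smul_smul, hTT]
    module
  have hPSD : (Z * Z - X).PosSemidef := by
    rw [hZZ]
    exact h.add ((psd_smul hTpsd (by positivity)).add
      (psd_smul Matrix.PosSemidef.one (by positivity)))
  have := tr_sqrt_le_of_sq hX hZpd hPSD
  rw [hZtr] at this
  linarith
end helpers

section transpose
variable {n m : ℕ}

lemma tr_sqrt_conj_le (M : Matrix (Fin n) (Fin m) ℝ)
    (h1 : (M * Mᴴ).PosSemidef) (h2 : (Mᴴ * M).PosSemidef) :
    h1.sqrt.trace ≤ h2.sqrt.trace := by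
  refine le_of_forall_pos_mul (c := ((n : ℝ) + (m : ℝ)))
    (by positivity) ?_
  intro ε hε
  have hε2 : (0:ℝ) < ε * ε := by positivity
  -- regularized Gram matrices
  set G := Mᴴ * M + (ε * ε) • (1 : Matrix (Fin m) (Fin m) ℝ) with hG
  set H := M * Mᴴ + (ε * ε) • (1 : Matrix (Fin n) (Fin n) ℝ) with hH
  have hGpd : G.PosDef := Matrix.PosDef.posSemidef_add h2 (smul_one_posDef hε2)
  have hHpd : H.PosDef := Matrix.PosDef.posSemidef_add h1 (smul_one_posDef hε2)
  set S := hGpd.posSemidef.sqrt with hS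
  have hSpsd : S.PosSemidef := hGpd.posSemidef.posSemidef_sqrt
  have hSS : S * S = G := hGpd.posSemidef.sqrt_mul_self
  have hSdet : IsUnit S.det := by
    have hd : S.det * S.det = G.det := by rw [← Matrix.det_mul, hSS]
    have : S.det ≠ 0 := by
      intro h0
      rw [h0, mul_zero] at hd
      exact hGpd.det_pos.ne' hd.symm
    exact this.isUnit
  have hss : S⁻¹ * S = 1 := Matrix.nonsing_inv_mul _ hSdet
  have hss' : S * S⁻¹ = 1 := Matrix.mul_nonsing_inv _ hSdet
  have hGdet : IsUnit G.det := hGpd.det_pos.ne'.isUnit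
  have hHdet : IsUnit H.det := hHpd.det_pos.ne'.isUnit
  have hgg : G * G⁻¹ = 1 := Matrix.mul_nonsing_inv _ hGdet
  have hhh : H⁻¹ * H = 1 := Matrix.nonsing_inv_mul _ hHdet
  set K := M * S⁻¹ * Mᴴ with hK
  have hKpsd : K.PosSemidef := hSpsd.inv.mul_mul_conjTranspose_same M
  have hZpd : (K + ε • 1).PosDef := Matrix.PosDef.posSemidef_add hKpsd (smul_one_posDef hε)
  set Z := K + ε • (1 : Matrix (Fin n) (Fin n) ℝ) with hZ
  -- push-through identity
  have hMG : M * G = H * M := by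
    rw [hG, hH]
    simp only [Matrix.mul_add, Matrix.add_mul, Matrix.mul_smul, Matrix.smul_mul,
      Matrix.mul_one, Matrix.one_mul, Matrix.mul_assoc]
  have hMGinv : M * G⁻¹ = H⁻¹ * M := by
    calc M * G⁻¹ = (H⁻¹ * H) * (M * G⁻¹) := by rw [hhh, Matrix.one_mul]
    _ = H⁻¹ * ((H * M) * G⁻¹) := by simp only [Matrix.mul_assoc]
    _ = H⁻¹ * ((M * G) * G⁻¹) := by rw [hMG]
    _ = H⁻¹ * (M * (G * G⁻¹)) := by simp only [Matrix.mul_assoc]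
    _ = H⁻¹ * M := by rw [hgg, Matrix.mul_one]
  have hSinvSinv : S⁻¹ * S⁻¹ = G⁻¹ := by rw [← Matrix.mul_inv_rev, hSS]
  -- W = M G⁻¹ Mᴴ = 1 - ε² H⁻¹
  have hW : M * (G⁻¹ * Mᴴ) = 1 - (ε * ε) • H⁻¹ := by
    have e1 : M * (G⁻¹ * Mᴴ) = H⁻¹ * (M * Mᴴ) := by
      rw [← Matrix.mul_assoc, hMGinv, Matrix.mul_assoc]
    have e2 : M * Mᴴ = H - (ε * ε) • 1 := by rw [hH]; abel
    rw [e1, e2, Matrix.mul_sub, Matrix.mul_smul, Matrix.mul_one, hhh]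
  -- M Mᴴ = K² + ε² • M G⁻¹ Mᴴ
  have hMM : M * Mᴴ = K * K + (ε * ε) • (M * (G⁻¹ * Mᴴ)) := by
    have e3 : Mᴴ * M = G - (ε * ε) • 1 := by rw [hG]; abel
    have e4 : K * K = M * ((S⁻¹ * (Mᴴ * M)) * (S⁻¹ * Mᴴ)) := by
      rw [hK]; simp only [Matrix.mul_assoc]
    rw [e4, e3]
    have e5 : (S⁻¹ * (G - (ε * ε) • 1)) = S - (ε * ε) • S⁻¹ := by
      rw [Matrix.mul_sub, Matrix.mul_smul, Matrix.mul_one]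
      congr 1
      calc S⁻¹ * G = S⁻¹ * (S * S) := by rw [hSS]
      _ = (S⁻¹ * S) * S := by rw [Matrix.mul_assoc]
      _ = S := by rw [hss, Matrix.one_mul]
    rw [e5, Matrix.sub_mul, Matrix.smul_mul]
    rw [show S * (S⁻¹ * Mᴴ) = Mᴴ by rw [← Matrix.mul_assoc, hss', Matrix.one_mul]]
    rw [Matrix.mul_sub, Matrix.mul_smul, ← Matrix.mul_assoc S⁻¹ S⁻¹ Mᴴ, hSinvSinv]
    abel
  -- Z² dominates M Mᴴ
  have hZZ : Z * Z - M * Mᴴ = (2 * ε) • K + ((ε * ε) * (ε * ε)) • H⁻¹ := by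
    rw [hZ]
    simp only [Matrix.add_mul, Matrix.mul_add, Matrix.smul_mul, Matrix.mul_smul,
      Matrix.mul_one, Matrix.one_mul, smul_smul]
    rw [hMM, hW]
    simp only [smul_sub, smul_smul]
    module
  have hZZpsd : (Z * Z - M * Mᴴ).PosSemidef := by
    rw [hZZ]
    exact (psd_smul hKpsd (by positivity)).add (psd_smul hHpd.inv.posSemidef (by positivity))
  have hmain : h1.sqrt.trace ≤ Z.trace := tr_sqrt_le_of_sq h1 hZpd hZZpsd
  have hZtr : Z.trace = K.trace + (n : ℝ) * ε := by
    rw [hZ, Matrix.trace_add, Matrix.trace_smul, Matrix.trace_one]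
    simp [mul_comm]
  have hKtr : K.trace ≤ S.trace := by
    have e6 : K.trace = (G * S⁻¹).trace - (ε * ε) * S⁻¹.trace := by
      rw [hK, Matrix.trace_mul_cycle]
      have : Mᴴ * M * S⁻¹ = (G - (ε * ε) • 1) * S⁻¹ := by
        congr 1
        rw [hG]; abel
      rw [this, Matrix.sub_mul, Matrix.trace_sub, Matrix.smul_mul, Matrix.one_mul,
        Matrix.trace_smul, smul_eq_mul]
    have e7 : G * S⁻¹ = S := by
      rw [← hSS, Matrix.mul_assoc, hss', Matrix.mul_one]
    have e8 : 0 ≤ S⁻¹.trace := psd_trace_nonneg hSpsd.inv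
    rw [e6, e7]
    nlinarith
  have hStr : S.trace ≤ h2.sqrt.trace + (m : ℝ) * ε := by
    have hTpsd : h2.sqrt.PosSemidef := h2.posSemidef_sqrt
    have hZ2pd : (h2.sqrt + ε • 1).PosDef :=
      Matrix.PosDef.posSemidef_add hTpsd (smul_one_posDef hε)
    have hZZ2 : (h2.sqrt + ε • 1) * (h2.sqrt + ε • 1) - G = (2 * ε) • h2.sqrt := by
      simp only [Matrix.add_mul, Matrix.mul_add, Matrix.smul_mul, Matrix.mul_smul,
        Matrix.mul_one, Matrix.one_mul, smul_smul, h2.sqrt_mul_self, hG]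
      module
    have hZZ2psd : ((h2.sqrt + ε • 1) * (h2.sqrt + ε • 1) - G).PosSemidef := by
      rw [hZZ2]; exact psd_smul hTpsd (by positivity)
    have := tr_sqrt_le_of_sq hGpd.posSemidef hZ2pd hZZ2psd
    rw [Matrix.trace_add, Matrix.trace_smul, Matrix.trace_one] at this
    rw [hS]
    simpa [mul_comm] using this
  have : h1.sqrt.trace ≤ h2.sqrt.trace + (m : ℝ) * ε + (n : ℝ) * ε := by
    rw [hZtr] at hmain
    linarith
  linarith [this]
end transpose


section nuclear
variable {n m : ℕ}

lemma tr_sqrt_congr {k : ℕ} {X Y : Matrix (Fin k) (Fin k) ℝ} (h : X = Y)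
    (hX : X.PosSemidef) (hY : Y.PosSemidef) : hX.sqrt.trace = hY.sqrt.trace := by
  subst h; rfl

lemma tr_sqrt_conj_eq (M : Matrix (Fin n) (Fin m) ℝ)
    (h1 : (M * Mᴴ).PosSemidef) (h2 : (Mᴴ * M).PosSemidef) :
    h1.sqrt.trace = h2.sqrt.trace := by
  refine le_antisymm (tr_sqrt_conj_le M h1 h2) ?_
  have h1' : (Mᴴ * Mᴴᴴ).PosSemidef := by rwa [conjTranspose_conjTranspose]
  have h2' : (Mᴴᴴ * Mᴴ).PosSemidef := by rwa [conjTranspose_conjTranspose]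
  have h3 := tr_sqrt_conj_le Mᴴ h1' h2'
  calc h2.sqrt.trace = h1'.sqrt.trace := tr_sqrt_congr (by rw [conjTranspose_conjTranspose]) _ _
  _ ≤ h2'.sqrt.trace := h3
  _ = h1.sqrt.trace := tr_sqrt_congr (by rw [conjTranspose_conjTranspose]) _ _

lemma nuclearNorm_conjT (M : Matrix (Fin n) (Fin m) ℝ) : nuclearNorm Mᴴ = nuclearNorm M := by
  rw [nuclearNorm_eq_sqrt, nuclearNorm_eq_sqrt]
  have h1 : (M * Mᴴ).PosSemidef := by
    have := Matrix.posSemidef_conjTranspose_mul_self Mᴴ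
    rwa [conjTranspose_conjTranspose] at this
  rw [tr_sqrt_congr (X := Mᴴᴴ * Mᴴ) (Y := M * Mᴴ) (by rw [conjTranspose_conjTranspose]) _ h1]
  exact tr_sqrt_conj_eq M h1 (Matrix.posSemidef_conjTranspose_mul_self M)

lemma nuclearNorm_left_proj {A : Matrix (Fin n) (Fin n) ℝ} (hA : Aᴴ = A) (hAA : A * A = A)
    (Θ : Matrix (Fin n) (Fin m) ℝ) : nuclearNorm (A * Θ) ≤ nuclearNorm Θ := by
  rw [nuclearNorm_eq_sqrt, nuclearNorm_eq_sqrt]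
  apply sqrt_trace_mono
  have key : Θᴴ * Θ - (A * Θ)ᴴ * (A * Θ) = ((1 - A) * Θ)ᴴ * ((1 - A) * Θ) := by
    simp only [Matrix.conjTranspose_mul, Matrix.conjTranspose_sub, Matrix.conjTranspose_one, hA,
      Matrix.sub_mul, Matrix.mul_sub, Matrix.one_mul, Matrix.mul_one, Matrix.mul_assoc]
    rw [show A * (A * Θ) = A * Θ by rw [← Matrix.mul_assoc, hAA]]
    abel
  rw [key]
  exact Matrix.posSemidef_conjTranspose_mul_self _

lemma nuclearNorm_right_proj {B : Matrix (Fin m) (Fin m) ℝ} (hB : Bᴴ = B) (hBB : B * B = B)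
    (Θ : Matrix (Fin n) (Fin m) ℝ) : nuclearNorm (Θ * B) ≤ nuclearNorm Θ := by
  have e1 : nuclearNorm (Θ * B) = nuclearNorm (B * Θᴴ) := by
    rw [← nuclearNorm_conjT (Θ * B), Matrix.conjTranspose_mul, hB]
  rw [e1, ← nuclearNorm_conjT Θ]
  exact nuclearNorm_left_proj hB hBB Θᴴ

lemma nuclearNorm_proj_proj {A : Matrix (Fin n) (Fin n) ℝ} (hA : Aᴴ = A) (hAA : A * A = A)
    {B : Matrix (Fin m) (Fin m) ℝ} (hB : Bᴴ = B) (hBB : B * B = B)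
    (Θ : Matrix (Fin n) (Fin m) ℝ) : nuclearNorm (A * Θ * B) ≤ nuclearNorm Θ := by
  calc nuclearNorm (A * Θ * B) ≤ nuclearNorm (A * Θ) := nuclearNorm_right_proj hB hBB _
  _ ≤ nuclearNorm Θ := nuclearNorm_left_proj hA hAA Θ
end nuclear


section mp
variable {k : ℕ}

lemma conjT_eq_T {a b : ℕ} (M : Matrix (Fin a) (Fin b) ℝ) : Mᴴ = Mᵀ := by
  ext i j
  simp [Matrix.conjTranspose_apply]

lemma eq_of_mulVec_eq {a b : ℕ} {A B : Matrix (Fin a) (Fin b) ℝ}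
    (h : ∀ v, A.mulVec v = B.mulVec v) : A = B := by
  ext i j
  have := congrFun (h (Pi.single j 1)) i
  simpa [Matrix.mulVec_single] using this

lemma absorb_left {A B : Matrix (Fin k) (Fin k) ℝ} (hBB : B * B = B)
    (h : LinearMap.range A.mulVecLin ≤ LinearMap.range B.mulVecLin) : B * A = A := by
  apply eq_of_mulVec_eq
  intro v
  obtain ⟨w, hw⟩ := h ⟨v, rfl⟩
  simp only [Matrix.mulVecLin_apply] at hw
  rw [← Matrix.mulVec_mulVec, ← hw, Matrix.mulVec_mulVec, hBB, hw]

lemma proj_unique {A B : Matrix (Fin k) (Fin k) ℝ}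
    (hAt : Aᵀ = A) (hAA : A * A = A) (hBt : Bᵀ = B) (hBB : B * B = B)
    (h : LinearMap.range A.mulVecLin = LinearMap.range B.mulVecLin) : A = B := by
  have hBA : B * A = A := absorb_left hBB h.le
  have hAB : A * B = B := absorb_left hAA h.ge
  calc A = Aᵀ := hAt.symm
  _ = (B * A)ᵀ := by rw [hBA]
  _ = Aᵀ * Bᵀ := Matrix.transpose_mul _ _
  _ = A * B := by rw [hAt, hBt]
  _ = B := hAB

/-- For a symmetric matrix, the two MP products agree. -/
lemma mp_comm {P Pp : Matrix (Fin k) (Fin k) ℝ} (hPt : Pᵀ = P) (h : IsMoorePenrose P Pp) :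
    Pp * P = P * Pp := by
  obtain ⟨h1, h2, h3, h4⟩ := h
  have hA : Pp * P = P * Ppᵀ := by
    calc Pp * P = (Pp * P)ᵀ := h4.symm
    _ = Pᵀ * Ppᵀ := Matrix.transpose_mul _ _
    _ = P * Ppᵀ := by rw [hPt]
  have hB : P * Pp = Ppᵀ * P := by
    calc P * Pp = (P * Pp)ᵀ := h3.symm
    _ = Ppᵀ * Pᵀ := Matrix.transpose_mul _ _
    _ = Ppᵀ * P := by rw [hPt]
  have e1 : P * Pp = (P * Pp) * (Pp * P) := by
    calc P * Pp = Ppᵀ * P := hB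
    _ = Ppᵀ * (P * Pp * P) := by rw [h1]
    _ = (Ppᵀ * P) * (Pp * P) := by simp only [Matrix.mul_assoc]
    _ = (P * Pp) * (Pp * P) := by rw [← hB]
  have e2 : Pp * P = (P * Pp) * (Pp * P) := by
    calc Pp * P = P * Ppᵀ := hA
    _ = (P * Pp * P) * Ppᵀ := by rw [h1]
    _ = (P * Pp) * (P * Ppᵀ) := by simp only [Matrix.mul_assoc]
    _ = (P * Pp) * (Pp * P) := by rw [← hA]
  rw [e2, ← e1]

lemma range_mp {P Pp : Matrix (Fin k) (Fin k) ℝ} (h : IsMoorePenrose P Pp) :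
    LinearMap.range (P * Pp).mulVecLin = LinearMap.range P.mulVecLin := by
  obtain ⟨h1, h2, h3, h4⟩ := h
  apply le_antisymm
  · rintro x ⟨v, rfl⟩
    exact ⟨Pp.mulVec v, by simp [Matrix.mulVecLin_apply, Matrix.mulVec_mulVec]⟩
  · rintro x ⟨v, rfl⟩
    refine ⟨P.mulVec v, ?_⟩
    simp only [Matrix.mulVecLin_apply, Matrix.mulVec_mulVec]
    rw [h1]

/-- The orthogonal projection onto the range of `P` is `P * Pp`. -/
lemma proj_eq_mp {P Pp Pr : Matrix (Fin k) (Fin k) ℝ} (h : IsMoorePenrose P Pp)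
    (hPr : IsOrthProjOnto Pr (LinearMap.range P.mulVecLin)) : Pr = P * Pp := by
  obtain ⟨hPrt, hPrPr, hPrRange⟩ := hPr
  refine proj_unique hPrt hPrPr h.2.2.1 ?_ ?_
  · calc (P * Pp) * (P * Pp) = (P * Pp * P) * Pp := by simp only [Matrix.mul_assoc]
    _ = P * Pp := by rw [h.1]
  · rw [hPrRange, range_mp h]
end mp

/-- Proposition 1, second part: the generalized nuclear norm problem equals a standard
nuclear norm problem plus unpenalized null-space components. -/
theorem stmt_13 {n m : ℕ} (P : Matrix (Fin n) (Fin n) ℝ) (hP : P.PosSemidef)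
    (Q : Matrix (Fin m) (Fin m) ℝ) (hQ : Q.PosSemidef)
    (Pplus : Matrix (Fin n) (Fin n) ℝ) (hPplus : IsMoorePenrose P Pplus)
    (Qplus : Matrix (Fin m) (Fin m) ℝ) (hQplus : IsMoorePenrose Q Qplus)
    (PrP : Matrix (Fin n) (Fin n) ℝ) (hPrP : IsOrthProjOnto PrP (LinearMap.range P.mulVecLin))
    (PrQ : Matrix (Fin m) (Fin m) ℝ) (hPrQ : IsOrthProjOnto PrQ (LinearMap.range Q.mulVecLin))
    (L : Matrix (Fin n) (Fin m) ℝ → ℝ) :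
    sInf {y : ℝ | ∃ Θ : Matrix (Fin n) (Fin m) ℝ, y = L Θ + nuclearNorm (P * Θ * Q)}
      = sInf {y : ℝ | ∃ Θ₁ Θ₂ Θ₃ : Matrix (Fin n) (Fin m) ℝ,
          y = L (Pplus * Θ₁ * Qplus + (1 - PrP) * Θ₂ + Θ₃ * (1 - PrQ)) + nuclearNorm Θ₁} := by
  have hPt : Pᵀ = P := by rw [← conjT_eq_T]; exact hP.1
  have hQt : Qᵀ = Q := by rw [← conjT_eq_T]; exact hQ.1
  have hPrP_eq : PrP = P * Pplus := proj_eq_mp hPplus hPrP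
  have hPrQ_eq : PrQ = Q * Qplus := proj_eq_mp hQplus hPrQ
  have iP1 : Pplus * P = PrP := by rw [mp_comm hPt hPplus, ← hPrP_eq]
  have iQ2 : Qplus * Q = PrQ := by rw [mp_comm hQt hQplus, ← hPrQ_eq]
  have iP2 : P * PrP = P := by
    rw [← iP1, ← Matrix.mul_assoc]; exact hPplus.1
  have iP3 : PrP * P = P := by
    rw [hPrP_eq]; exact hPplus.1
  have iQ3 : PrQ * Q = Q := by
    rw [hPrQ_eq]; exact hQplus.1
  have iQ1 : Q * Qplus = PrQ := hPrQ_eq.symm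
  have hP0 : P * (1 - PrP) = 0 := by
    rw [Matrix.mul_sub, Matrix.mul_one, iP2, sub_self]
  have hQ0 : (1 - PrQ) * Q = 0 := by
    rw [Matrix.sub_mul, Matrix.one_mul, iQ3, sub_self]
  -- Forward: every Θ is representable
  have F1 : ∀ Θ : Matrix (Fin n) (Fin m) ℝ,
      Pplus * (P * Θ * Q) * Qplus + (1 - PrP) * Θ + (PrP * Θ) * (1 - PrQ) = Θ := by
    intro Θ
    have t1 : Pplus * (P * Θ * Q) * Qplus = PrP * Θ * PrQ := by
      calc Pplus * (P * Θ * Q) * Qplus = (Pplus * P) * (Θ * (Q * Qplus)) := by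
            simp only [Matrix.mul_assoc]
      _ = PrP * (Θ * PrQ) := by rw [iP1, iQ1]
      _ = PrP * Θ * PrQ := by simp only [Matrix.mul_assoc]
    rw [t1, Matrix.sub_mul, Matrix.one_mul, Matrix.mul_sub, Matrix.mul_one]
    abel
  -- Backward : P * arg * Q = PrP * Θ₁ * PrQ
  have F2 : ∀ Θ₁ Θ₂ Θ₃ : Matrix (Fin n) (Fin m) ℝ,
      P * (Pplus * Θ₁ * Qplus + (1 - PrP) * Θ₂ + Θ₃ * (1 - PrQ)) * Q = PrP * Θ₁ * PrQ := by
    intro Θ₁ Θ₂ Θ₃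
    have e1 : P * (Pplus * Θ₁ * Qplus) * Q = PrP * Θ₁ * PrQ := by
      calc P * (Pplus * Θ₁ * Qplus) * Q = (P * Pplus) * (Θ₁ * (Qplus * Q)) := by
            simp only [Matrix.mul_assoc]
      _ = PrP * (Θ₁ * PrQ) := by rw [← hPrP_eq, iQ2]
      _ = PrP * Θ₁ * PrQ := by simp only [Matrix.mul_assoc]
    have e2 : P * ((1 - PrP) * Θ₂) * Q = 0 := by
      calc P * ((1 - PrP) * Θ₂) * Q = (P * (1 - PrP)) * (Θ₂ * Q) := by
            simp only [Matrix.mul_assoc]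
      _ = 0 := by rw [hP0, Matrix.zero_mul]
    have e3 : P * (Θ₃ * (1 - PrQ)) * Q = 0 := by
      calc P * (Θ₃ * (1 - PrQ)) * Q = (P * Θ₃) * ((1 - PrQ) * Q) := by
            simp only [Matrix.mul_assoc]
      _ = 0 := by rw [hQ0, Matrix.mul_zero]
    rw [Matrix.mul_add, Matrix.mul_add, Matrix.add_mul, Matrix.add_mul, e1, e2, e3]
    simp
  -- norm contraction
  have F3 : ∀ Θ₁ : Matrix (Fin n) (Fin m) ℝ,
      nuclearNorm (PrP * Θ₁ * PrQ) ≤ nuclearNorm Θ₁ := by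
    intro Θ₁
    refine nuclearNorm_proj_proj ?_ hPrP.2.1 ?_ hPrQ.2.1 Θ₁
    · rw [conjT_eq_T]; exact hPrP.1
    · rw [conjT_eq_T]; exact hPrQ.1
  set S := {y : ℝ | ∃ Θ : Matrix (Fin n) (Fin m) ℝ, y = L Θ + nuclearNorm (P * Θ * Q)} with hS
  set T := {y : ℝ | ∃ Θ₁ Θ₂ Θ₃ : Matrix (Fin n) (Fin m) ℝ,
      y = L (Pplus * Θ₁ * Qplus + (1 - PrP) * Θ₂ + Θ₃ * (1 - PrQ)) + nuclearNorm Θ₁} with hT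
  have hST : S ⊆ T := by
    rintro y ⟨Θ, rfl⟩
    exact ⟨P * Θ * Q, Θ, PrP * Θ, by rw [F1 Θ]⟩
  have hdom : ∀ t ∈ T, ∃ s ∈ S, s ≤ t := by
    rintro t ⟨Θ₁, Θ₂, Θ₃, rfl⟩
    set arg := Pplus * Θ₁ * Qplus + (1 - PrP) * Θ₂ + Θ₃ * (1 - PrQ) with harg
    refine ⟨L arg + nuclearNorm (P * arg * Q), ⟨arg, rfl⟩, ?_⟩
    have : nuclearNorm (P * arg * Q) ≤ nuclearNorm Θ₁ := by
      rw [harg, F2 Θ₁ Θ₂ Θ₃]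
      exact F3 Θ₁
    linarith
  have hSne : S.Nonempty := ⟨_, ⟨0, rfl⟩⟩
  have hTne : T.Nonempty := ⟨_, ⟨0, 0, 0, rfl⟩⟩
  by_cases hbd : BddBelow T
  · have hbdS : BddBelow S := hbd.mono hST
    apply le_antisymm
    · refine le_csInf hTne ?_
      rintro t ht
      obtain ⟨s, hsS, hle⟩ := hdom t ht
      exact (csInf_le hbdS hsS).trans hle
    · exact csInf_le_csInf hbd hSne hST
  · have hbdS : ¬ BddBelow S := by
      intro ⟨b, hb⟩
      refine hbd ⟨b, ?_⟩
      intro t ht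
      obtain ⟨s, hsS, hle⟩ := hdom t ht
      exact (hb hsS).trans hle
    rw [Real.sInf_of_not_bddBelow hbd, Real.sInf_of_not_bddBelow hbdS]
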